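/- Let k be a field of characteristic 3, let ε₁, γ₀ ∈ k with ε₁ ≠ 0 and γ₀ ≠ 0, and let φ₁, φ₂, φ₃, γ₁, γ₂, γ₃, γ₄, γ₅ ∈ k. Set b₂ = ε₁t², b₄ = t²(φ₃t² + φ₂t + φ₁), b₆ = t(γ₅t⁵ + γ₄t⁴ + γ₃t³ + γ₂t² + γ₁t + γ₀), and Δ = −b₂²(b₂b₆ − b₄²) + b₄³. Then for all α, a, b ∈ k one has Δ ≠ α·t⁶(t−a)³(t−b)³. (This shows the configurations II I₃ I₃ and II I₆, with the type II fibre of Lang's case 1C over t = 0, do not exist on a rational elliptic surface in characteristic 3.) -/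
import Mathlib


open Polynomial

theorem stmt9 {k : Type*} [Field k] [CharP k 3]
    (ε₁ γ₀ : k) (hε₁ : ε₁ ≠ 0) (hγ₀ : γ₀ ≠ 0)
    (φ₁ φ₂ φ₃ γ₁ γ₂ γ₃ γ₄ γ₅ : k)
    (b₂ b₄ b₆ Δ : k[X])
    (hb₂ : b₂ = C ε₁ * X ^ 2)
    (hb₄ : b₄ = X ^ 2 * (C φ₃ * X ^ 2 + C φ₂ * X + C φ₁))
    (hb₆ : b₆ = X * (C γ₅ * X ^ 5 + C γ₄ * X ^ 4 + C γ₃ * X ^ 3 + C γ₂ * X ^ 2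
              + C γ₁ * X + C γ₀))
    (hΔ : Δ = -b₂ ^ 2 * (b₂ * b₆ - b₄ ^ 2) + b₄ ^ 3) :
    ∀ α a b : k, Δ ≠ C α * (X ^ 6 * (X - C a) ^ 3 * (X - C b) ^ 3) := by
  intro α a b h
  subst hb₂ hb₄ hb₆ hΔ
  haveI : Fact (Nat.Prime 3) := ⟨by norm_num⟩
  have hc : ∀ c : k, (X - C c : k[X]) ^ 3 = X ^ 3 - C (c ^ 3) := fun c => by
    rw [sub_pow_char, ← C_pow]
  rw [hc a, hc b] at h
  have h3 : (3 : k) = 0 := by exact_mod_cast CharP.cast_eq_zero k 3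
  ring_nf at h
  have h7 := congrArg (fun p => p.coeff 7) h
  simp only [coeff_add, coeff_sub, coeff_neg, coeff_C_mul, coeff_X_pow, coeff_mul_C,
    ← C_pow, ← C_mul, ← C_neg, mul_assoc] at h7
  simp [X_pow_mul, coeff_mul_X_pow', mul_coeff_zero, coeff_ofNat_zero] at h7
  rw [h3] at h7
  simp [hε₁, hγ₀] at h7
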